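/- Fix x ∈ ℝ^d, cdfs F_1*,...,F_d*, a bounded set S ⊆ ℝ^d, π_s ∈ [0,1], and suppose min_i F_i*(x_i) is less than or equal to π_s for every s ∈ S with x ≤ s. Choose r ∈ ℝ with r ≥ x_j + 1 and r ≥ s_j + 1 for all j and all s ∈ S. Define G_j(t) = F_j*(x_j)·1_{[x_j,r)}(t) + F_j*(t)·1_{[r,∞)}(t) and F(y) = min_j G_j(y_j). Then F is a cdf on ℝ^d, F_j(t) ≤ F_j*(t) for all t and j, F(s) ≤ π_s for all s ∈ S, and F(x) = min_j F_j*(x_j). -/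

import Mathlib

open MeasureTheory
open Set Filter Topology


lemma sc_vol_aux {b : ℝ} (hb0 : 0 ≤ b) (hb1 : b ≤ 1) :
    volume (Set.Iic b ∩ Set.Ioo (0:ℝ) 1) = ENNReal.ofReal b := by
  rcases lt_or_ge b 1 with hb | hb
  · have : Set.Iic b ∩ Set.Ioo (0:ℝ) 1 = Set.Ioc 0 b := by
      ext u
      constructor
      · rintro ⟨h1, h2, h3⟩; exact ⟨h2, h1⟩
      · rintro ⟨h1, h2⟩; exact ⟨h2, h1, lt_of_le_of_lt h2 hb⟩
    rw [this, Real.volume_Ioc, sub_zero]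
  · have hb' : b = 1 := le_antisymm hb1 hb
    subst hb'
    have : Set.Iic (1:ℝ) ∩ Set.Ioo (0:ℝ) 1 = Set.Ioo 0 1 := by
      ext u
      constructor
      · rintro ⟨h1, h2⟩; exact h2
      · rintro ⟨h1, h2⟩; exact ⟨le_of_lt h2, h1, h2⟩
    rw [this, Real.volume_Ioo, sub_zero]

section Aux
variable (ν₀ : Measure ℝ) [IsProbabilityMeasure ν₀] (x₀ r : ℝ) (G₀ : ℝ → ℝ)

lemma sc_mono_aux (hxr : x₀ + 1 ≤ r)
    (hG₀ : ∀ t, G₀ t = if r ≤ t then (ν₀ (Set.Iic t)).toReal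
      else if x₀ ≤ t then (ν₀ (Set.Iic x₀)).toReal else 0) :
    Monotone G₀ := by
  have hmeas : ∀ a c : ℝ, a ≤ c → (ν₀ (Set.Iic a)).toReal ≤ (ν₀ (Set.Iic c)).toReal :=
    fun a c h => ENNReal.toReal_mono (measure_ne_top _ _)
      (measure_mono (Set.Iic_subset_Iic.2 h))
  have hxr' : x₀ ≤ r := by linarith
  intro s t hst
  rw [hG₀ s, hG₀ t]
  by_cases hrs : r ≤ s
  · rw [if_pos hrs, if_pos (le_trans hrs hst)]
    exact hmeas _ _ hst
  · rw [if_neg hrs]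
    by_cases hrt : r ≤ t
    · rw [if_pos hrt]
      by_cases hxs : x₀ ≤ s
      · rw [if_pos hxs]; exact hmeas _ _ (le_trans hxr' hrt)
      · rw [if_neg hxs]; exact ENNReal.toReal_nonneg
    · rw [if_neg hrt]
      by_cases hxs : x₀ ≤ s
      · rw [if_pos hxs, if_pos (le_trans hxs hst)]
      · rw [if_neg hxs]
        by_cases hxt : x₀ ≤ t
        · rw [if_pos hxt]; exact ENNReal.toReal_nonneg
        · rw [if_neg hxt]

omit [IsProbabilityMeasure ν₀] in
lemma sc_nonneg_aux
    (hG₀ : ∀ t, G₀ t = if r ≤ t then (ν₀ (Set.Iic t)).toReal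
      else if x₀ ≤ t then (ν₀ (Set.Iic x₀)).toReal else 0) (t : ℝ) :
    0 ≤ G₀ t := by
  rw [hG₀ t]; split_ifs <;> simp [ENNReal.toReal_nonneg]

lemma sc_le_one_aux
    (hG₀ : ∀ t, G₀ t = if r ≤ t then (ν₀ (Set.Iic t)).toReal
      else if x₀ ≤ t then (ν₀ (Set.Iic x₀)).toReal else 0) (t : ℝ) :
    G₀ t ≤ 1 := by
  have h : ∀ a : ℝ, (ν₀ (Set.Iic a)).toReal ≤ 1 := by
    intro a
    rw [← measureReal_def, ← ProbabilityTheory.cdf_eq_real]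
    exact ProbabilityTheory.cdf_le_one ν₀ a
  rw [hG₀ t]; split_ifs <;> simp [h]

lemma sc_galois_aux (hxr : x₀ + 1 ≤ r)
    (hG₀ : ∀ t, G₀ t = if r ≤ t then (ν₀ (Set.Iic t)).toReal
      else if x₀ ≤ t then (ν₀ (Set.Iic x₀)).toReal else 0)
    {u : ℝ} (hu0 : 0 < u) (hu1 : u < 1) (y : ℝ) :
    sInf {t | u ≤ G₀ t} ≤ y ↔ u ≤ G₀ y := by
  have hmono := sc_mono_aux ν₀ x₀ r G₀ hxr hG₀
  have hxr' : x₀ < r := by linarith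
  set A : Set ℝ := {t | u ≤ G₀ t} with hA
  have hsub : A ⊆ Set.Ici x₀ := by
    intro t ht
    by_contra h
    rw [Set.mem_Ici] at h
    push_neg at h
    have h0 : G₀ t = 0 := by
      rw [hG₀ t, if_neg (by linarith), if_neg (by linarith)]
    rw [Set.mem_setOf_eq, h0] at ht
    linarith
  have hbdd : BddBelow A := ⟨x₀, hsub⟩
  have hne : A.Nonempty := by
    have h1 : ∀ᶠ t in atTop, u ≤ ProbabilityTheory.cdf ν₀ t :=
      (ProbabilityTheory.tendsto_cdf_atTop ν₀).eventually (eventually_ge_nhds hu1)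
    have h2 : ∀ᶠ t in atTop, r ≤ t := eventually_ge_atTop r
    obtain ⟨t, ht1, ht2⟩ := (h1.and h2).exists
    refine ⟨t, ?_⟩
    rw [Set.mem_setOf_eq, hG₀ t, if_pos ht2, ← measureReal_def, ← ProbabilityTheory.cdf_eq_real]
    exact ht1
  have hmem : sInf A ∈ A := by
    set a := sInf A with ha
    have hax : x₀ ≤ a := le_csInf hne (fun t ht => hsub ht)
    have hkey : ∀ s, a < s → u ≤ G₀ s := by
      intro s hs
      obtain ⟨t, ht, hts⟩ := exists_lt_of_csInf_lt hne hs
      exact le_trans ht (hmono (le_of_lt hts))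
    by_cases har : r ≤ a
    · -- use right continuity of the cdf
      rw [Set.mem_setOf_eq, hG₀ a, if_pos har, ← measureReal_def, ← ProbabilityTheory.cdf_eq_real]
      have hcont : ContinuousWithinAt (ProbabilityTheory.cdf ν₀) (Set.Ioi a) a :=
        ((ProbabilityTheory.cdf ν₀).right_continuous a).mono Set.Ioi_subset_Ici_self
      refine ge_of_tendsto hcont ?_
      filter_upwards [self_mem_nhdsWithin] with s hs
      have hs' : a < s := hs
      have := hkey s hs'
      rwa [hG₀ s, if_pos (le_trans har (le_of_lt hs')), ← measureReal_def, ← ProbabilityTheory.cdf_eq_real] at this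
    · push_neg at har
      have hs : a < (a + r) / 2 := by linarith
      have hsr : (a + r) / 2 < r := by linarith
      have := hkey _ hs
      rw [hG₀ ((a + r) / 2), if_neg (by linarith), if_pos (by linarith)] at this
      rw [Set.mem_setOf_eq, hG₀ a, if_neg (by linarith), if_pos hax]
      exact this
  constructor
  · intro h
    exact le_trans hmem (hmono h)
  · intro h
    exact csInf_le hbdd h

end Aux

open MeasureTheory Set Filter Topology in
/-- The comonotone transport map. -/
noncomputable def scT {d : ℕ} (x : Fin d → ℝ) (G : Fin d → ℝ → ℝ) : ℝ → (Fin d → ℝ) :=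
  fun u j => if 0 < u ∧ u < 1 then sInf {t | u ≤ G j t} else x j

open MeasureTheory Set Filter Topology in
lemma scT_measurable {d : ℕ} (x : Fin d → ℝ) (G : Fin d → ℝ → ℝ)
    (hgal : ∀ j (u : ℝ), 0 < u → u < 1 → ∀ y, (sInf {t | u ≤ G j t} ≤ y ↔ u ≤ G j y)) :
    Measurable (scT x G) := by
  apply measurable_pi_lambda
  intro j
  apply measurable_of_Iic
  intro y
  have : (fun u => scT x G u j) ⁻¹' Set.Iic y =
      (Set.Ioo 0 1 ∩ Set.Iic (G j y)) ∪ ((Set.Ioo (0:ℝ) 1)ᶜ ∩ {u : ℝ | x j ≤ y}) := by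
    ext u
    simp only [Set.mem_preimage, Set.mem_Iic, Set.mem_union, Set.mem_inter_iff,
      Set.mem_compl_iff, Set.mem_Ioo, Set.mem_setOf_eq, scT]
    by_cases hu : 0 < u ∧ u < 1
    · rw [if_pos hu, hgal j u hu.1 hu.2 y]
      tauto
    · rw [if_neg hu]
      tauto
  rw [this]
  exact (measurableSet_Ioo.inter measurableSet_Iic).union
    (measurableSet_Ioo.compl.inter (MeasurableSet.const _))

/-- Explicit construction (Case 1 of the sharpness proof): with
`G_j(t) = F_j*(x_j)·1_{[x_j,r)}(t) + F_j*(t)·1_{[r,∞)}(t)` and `F(y) = min_j G_j(y_j)`,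
`F` is a cdf on `ℝ^d` whose marginals are dominated by `F_j*`, which satisfies `F(s) ≤ π_s`
for `s ∈ S`, and `F(x) = min_j F_j*(x_j)`. -/
theorem sharpness_construction_case1 {d : ℕ} [NeZero d]
    (ν : Fin d → Measure ℝ) (hν : ∀ j, IsProbabilityMeasure (ν j))
    (S : Set (Fin d → ℝ)) (hS : Bornology.IsBounded S)
    (π : (Fin d → ℝ) → ℝ) (hπ : ∀ s ∈ S, π s ∈ Set.Icc (0 : ℝ) 1)
    (x : Fin d → ℝ)
    (hmin : ∀ s ∈ S, (∀ j, x j ≤ s j) →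
      (⨅ j, (ν j (Set.Iic (x j))).toReal) ≤ π s)
    (r : ℝ) (hrx : ∀ j, x j + 1 ≤ r) (hrS : ∀ s ∈ S, ∀ j, s j + 1 ≤ r)
    (G : Fin d → ℝ → ℝ)
    (hG : ∀ j t, G j t = if r ≤ t then (ν j (Set.Iic t)).toReal
      else if x j ≤ t then (ν j (Set.Iic (x j))).toReal else 0) :
    ∃ μ : Measure (Fin d → ℝ), IsProbabilityMeasure μ ∧
      (∀ y : Fin d → ℝ, (μ {z : Fin d → ℝ | ∀ j, z j ≤ y j}).toReal = ⨅ j, G j (y j)) ∧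
      (∀ (j : Fin d) (t : ℝ),
        (μ {z : Fin d → ℝ | z j ≤ t}).toReal ≤ (ν j (Set.Iic t)).toReal) ∧
      (∀ s ∈ S, (μ {z : Fin d → ℝ | ∀ j, z j ≤ s j}).toReal ≤ π s) ∧
      (μ {z : Fin d → ℝ | ∀ j, z j ≤ x j}).toReal = ⨅ j, (ν j (Set.Iic (x j))).toReal := by
  classical
  haveI : Nonempty (Fin d) := ⟨⟨0, Nat.pos_of_ne_zero (NeZero.ne d)⟩⟩
  -- basic facts about the G j
  have hG0 : ∀ j t, 0 ≤ G j t := fun j t => sc_nonneg_aux (ν j) (x j) r (G j) (hG j) t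
  have hG1 : ∀ j t, G j t ≤ 1 := fun j t => by
    haveI := hν j; exact sc_le_one_aux (ν j) (x j) r (G j) (hG j) t
  have hgal : ∀ j (u : ℝ), 0 < u → u < 1 → ∀ y,
      (sInf {t | u ≤ G j t} ≤ y ↔ u ≤ G j y) := fun j u h0 h1 y => by
    haveI := hν j
    exact sc_galois_aux (ν j) (x j) r (G j) (hrx j) (hG j) h0 h1 y
  have hTmeas : Measurable (scT x G) := scT_measurable x G hgal
  set ρ : Measure ℝ := volume.restrict (Set.Ioo 0 1) with hρdef
  haveI hρ : IsProbabilityMeasure ρ :=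
    ⟨by rw [hρdef, Measure.restrict_apply_univ, Real.volume_Ioo]; norm_num⟩
  set μ : Measure (Fin d → ℝ) := ρ.map (scT x G) with hμdef
  -- measurability of rectangles
  have hsetm : ∀ y : Fin d → ℝ, MeasurableSet {z : Fin d → ℝ | ∀ j, z j ≤ y j} := by
    intro y
    have : {z : Fin d → ℝ | ∀ j, z j ≤ y j}
        = ⋂ j, (fun z : Fin d → ℝ => z j) ⁻¹' Set.Iic (y j) := by
      ext z; simp
    rw [this]
    exact MeasurableSet.iInter (fun j => (measurable_pi_apply j) measurableSet_Iic)
  -- the cdf of μ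
  have hbddG : ∀ y : Fin d → ℝ, BddBelow (Set.range fun j => G j (y j)) :=
    fun y => (Set.finite_range _).bddBelow
  have hm0 : ∀ y : Fin d → ℝ, 0 ≤ ⨅ j, G j (y j) :=
    fun y => le_ciInf (fun j => hG0 j (y j))
  have hm1 : ∀ y : Fin d → ℝ, (⨅ j, G j (y j)) ≤ 1 := fun y =>
    le_trans (ciInf_le (hbddG y) (Classical.arbitrary _)) (hG1 _ _)
  have hmap : ∀ y : Fin d → ℝ,
      μ {z : Fin d → ℝ | ∀ j, z j ≤ y j} = ENNReal.ofReal (⨅ j, G j (y j)) := by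
    intro y
    rw [hμdef, Measure.map_apply hTmeas (hsetm y), hρdef,
      Measure.restrict_apply' measurableSet_Ioo]
    have hset : scT x G ⁻¹' {z : Fin d → ℝ | ∀ j, z j ≤ y j} ∩ Set.Ioo 0 1
        = Set.Iic (⨅ j, G j (y j)) ∩ Set.Ioo (0:ℝ) 1 := by
      ext u
      simp only [Set.mem_inter_iff, Set.mem_preimage, Set.mem_setOf_eq, Set.mem_Ioo,
        Set.mem_Iic, and_congr_left_iff]
      rintro ⟨hu0, hu1⟩
      have hTj : ∀ j, scT x G u j = sInf {t | u ≤ G j t} :=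
        fun j => if_pos ⟨hu0, hu1⟩
      constructor
      · intro h
        rw [le_ciInf_iff (hbddG y)]
        intro j
        exact (hgal j u hu0 hu1 (y j)).mp (by rw [← hTj j]; exact h j)
      · intro h j
        rw [hTj j]
        exact (hgal j u hu0 hu1 (y j)).mpr (le_trans h (ciInf_le (hbddG y) j))
    rw [hset, sc_vol_aux (hm0 y) (hm1 y)]
  have hcdf : ∀ y : Fin d → ℝ,
      (μ {z : Fin d → ℝ | ∀ j, z j ≤ y j}).toReal = ⨅ j, G j (y j) := by
    intro y
    rw [hmap y, ENNReal.toReal_ofReal (hm0 y)]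
  -- marginals
  have hmarg : ∀ (j : Fin d) (t : ℝ),
      μ {z : Fin d → ℝ | z j ≤ t} = ENNReal.ofReal (G j t) := by
    intro j t
    have hms : MeasurableSet {z : Fin d → ℝ | z j ≤ t} :=
      (measurable_pi_apply j) measurableSet_Iic
    rw [hμdef, Measure.map_apply hTmeas hms, hρdef,
      Measure.restrict_apply' measurableSet_Ioo]
    have hset : scT x G ⁻¹' {z : Fin d → ℝ | z j ≤ t} ∩ Set.Ioo 0 1
        = Set.Iic (G j t) ∩ Set.Ioo (0:ℝ) 1 := by
      ext u
      simp only [Set.mem_inter_iff, Set.mem_preimage, Set.mem_setOf_eq, Set.mem_Ioo,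
        Set.mem_Iic, and_congr_left_iff]
      rintro ⟨hu0, hu1⟩
      have hTj : scT x G u j = sInf {s | u ≤ G j s} := if_pos ⟨hu0, hu1⟩
      rw [hTj]
      exact hgal j u hu0 hu1 t
    rw [hset, sc_vol_aux (hG0 j t) (hG1 j t)]
  refine ⟨μ, Measure.isProbabilityMeasure_map hTmeas.aemeasurable, hcdf, ?_, ?_, ?_⟩
  · -- marginals dominated by the given cdfs
    intro j t
    rw [hmarg j t, ENNReal.toReal_ofReal (hG0 j t)]
    rw [hG j t]
    split_ifs with h1 h2
    · exact le_refl _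
    · exact ENNReal.toReal_mono (measure_ne_top _ _)
        (measure_mono (Set.Iic_subset_Iic.2 h2))
    · exact ENNReal.toReal_nonneg
  · -- constraint on S
    intro s hs
    rw [hcdf s]
    by_cases hall : ∀ j, x j ≤ s j
    · have heq : ∀ j, G j (s j) = (ν j (Set.Iic (x j))).toReal := by
        intro j
        have := hrS s hs j
        rw [hG j (s j), if_neg (by linarith), if_pos (hall j)]
      rw [iInf_congr heq]
      exact hmin s hs hall
    · push_neg at hall
      obtain ⟨j, hj⟩ := hall
      have hGz : G j (s j) = 0 := by
        have := hrS s hs j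
        rw [hG j (s j), if_neg (by linarith), if_neg (not_le.2 hj)]
      calc (⨅ j, G j (s j)) ≤ G j (s j) := ciInf_le (hbddG s) j
        _ = 0 := hGz
        _ ≤ π s := (hπ s hs).1
  · -- value at x
    rw [hcdf x]
    refine iInf_congr (fun j => ?_)
    have := hrx j
    rw [hG j (x j), if_neg (by linarith), if_pos (le_refl _)]
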